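/- Let $G$ be a finite abelian group of order $v = n\ell$, $D$ a $(v,k,\lambda)$ difference set in $G$, $H$ a subgroup of order $n$, and $k_i = |D \cap Hg_i|$ the intersection numbers with respect to $H$. Then for every $i$, $\frac{k}{\ell} - \sqrt{\frac{(k-\lambda)(\ell-1)}{\ell}} \le k_i \le \frac{k}{\ell} + \sqrt{\frac{(k-\lambda)(\ell-1)}{\ell}}$. -/

import Mathlib

open scoped Classical

theorem stmt_9 {G : Type*} [CommGroup G] [Fintype G] (v k lam n ℓ : ℕ)
    (D : Finset G) (H : Subgroup G)
    (hv : Fintype.card G = v) (hvnl : v = n * ℓ) (hk : D.card = k)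
    (hDS : ∀ w : G, w ≠ 1 → (D ∩ D.image (· * w)).card = lam)
    (hn : Nat.card H = n) (hℓ : H.index = ℓ)
    (g : Fin ℓ → G)
    (hreps : ∀ a : G, ∃! i : Fin ℓ, a * (g i)⁻¹ ∈ H) :
    ∀ i : Fin ℓ,
      (k : ℝ) / ℓ - Real.sqrt (((k : ℝ) - lam) * ((ℓ : ℝ) - 1) / ℓ)
        ≤ ((D.filter (fun d => d * (g i)⁻¹ ∈ H)).card : ℝ) ∧
      ((D.filter (fun d => d * (g i)⁻¹ ∈ H)).card : ℝ)
        ≤ (k : ℝ) / ℓ + Real.sqrt (((k : ℝ) - lam) * ((ℓ : ℝ) - 1) / ℓ) := by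
  intro i
  have hℓpos : 0 < ℓ := i.pos
  -- the coset index function
  have hfex := fun a => (hreps a).choose_spec
  set f : G → Fin ℓ := fun a => (hreps a).choose with hfdef
  have hfmem : ∀ a, a * (g (f a))⁻¹ ∈ H := fun a => (hfex a).1
  have hiff : ∀ a (j : Fin ℓ), (a * (g j)⁻¹ ∈ H ↔ f a = j) := by
    intro a j
    constructor
    · intro h; exact ((hfex a).2 j h).symm
    · rintro rfl; exact hfmem a
  set K : Fin ℓ → ℕ := fun j => (D.filter (fun d => d * (g j)⁻¹ ∈ H)).card with hKdef
  have hKfib : ∀ j, D.filter (fun d => d * (g j)⁻¹ ∈ H) = D.filter (fun d => f d = j) := by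
    intro j; apply Finset.filter_congr; intro d _; exact hiff d j
  have hsum1 : ∑ j, K j = k := by
    rw [← hk]
    simp only [hKdef, hKfib]
    exact (Finset.card_eq_sum_card_fiberwise (fun x _ => Finset.mem_univ (f x))).symm
  -- pair counts
  have hpair : ∀ w : G, ((D ×ˢ D).filter (fun p => p.1 * p.2⁻¹ = w)).card
      = (D ∩ D.image (· * w)).card := by
    intro w
    apply Finset.card_bij (fun p _ => p.1)
    · intro p hp
      simp only [Finset.mem_filter, Finset.mem_product] at hp
      obtain ⟨⟨h1, h2⟩, h3⟩ := hp
      simp only [Finset.mem_inter, Finset.mem_image]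
      refine ⟨h1, p.2, h2, ?_⟩
      rw [← h3, mul_comm, inv_mul_cancel_right]
    · intro p hp q hq h
      simp only [Finset.mem_filter, Finset.mem_product] at hp hq
      have hp2 := hp.2
      rw [h] at hp2
      exact Prod.ext h (inv_injective (mul_left_cancel (hp2.trans hq.2.symm)))
    · intro d hd
      simp only [Finset.mem_inter, Finset.mem_image] at hd
      obtain ⟨h1, d', hd', hdw⟩ := hd
      refine ⟨(d, d'), ?_, rfl⟩
      simp only [Finset.mem_filter, Finset.mem_product]
      exact ⟨⟨h1, hd'⟩, by rw [← hdw, mul_comm d' w, mul_inv_cancel_right]⟩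
  -- the set T of pairs in the same coset of H
  set T : Finset (G × G) := (D ×ˢ D).filter (fun p => p.1 * p.2⁻¹ ∈ H) with hTdef
  have hTfib : ∀ j : Fin ℓ, T.filter (fun p => f p.2 = j)
      = (D.filter (fun d => d * (g j)⁻¹ ∈ H)) ×ˢ (D.filter (fun d => d * (g j)⁻¹ ∈ H)) := by
    intro j
    ext p
    simp only [hTdef, Finset.mem_filter, Finset.mem_product]
    constructor
    · rintro ⟨⟨⟨hd1, hd2⟩, hH⟩, hfj⟩
      have h2 : p.2 * (g j)⁻¹ ∈ H := (hiff p.2 j).2 hfj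
      have key : p.1 * (g j)⁻¹ = (p.1 * p.2⁻¹) * (p.2 * (g j)⁻¹) := by group
      exact ⟨⟨hd1, key ▸ H.mul_mem hH h2⟩, hd2, h2⟩
    · rintro ⟨⟨hd1, h1⟩, hd2, h2⟩
      have key : p.1 * p.2⁻¹ = (p.1 * (g j)⁻¹) * (p.2 * (g j)⁻¹)⁻¹ := by group
      exact ⟨⟨⟨hd1, hd2⟩, key ▸ H.mul_mem h1 (H.inv_mem h2)⟩, (hiff p.2 j).1 h2⟩
  have hsum2 : ∑ j, K j ^ 2 = T.card := by
    rw [Finset.card_eq_sum_card_fiberwise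
      (f := fun p : G × G => f p.2) (t := Finset.univ) (fun x _ => Finset.mem_univ _)]
    exact Finset.sum_congr rfl fun j _ => by
      rw [hKdef, hTfib j, Finset.card_product, sq]
  have hHF : (Finset.univ.filter (· ∈ H)).card = n := by
    rw [← hn, Nat.card_eq_fintype_card]
    simp [Fintype.card_subtype]
  have hD1 : (D ∩ D.image (· * (1 : G))).card = k := by
    simp only [mul_one, Finset.image_id', Finset.inter_self, hk]
  have hTcard : T.card = k + (n - 1) * lam := by
    rw [Finset.card_eq_sum_card_fiberwise
      (f := fun p : G × G => p.1 * p.2⁻¹) (t := Finset.univ.filter (· ∈ H))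
      (fun p hp => by
        simp only [hTdef, Finset.mem_filter] at hp ⊢
        exact (Finset.mem_filter.2 ⟨Finset.mem_univ _, (Finset.mem_filter.1 (hp : p ∈ (D ×ˢ D).filter (fun p => p.1 * p.2⁻¹ ∈ H))).2⟩ : _ ∈ Finset.univ.filter (· ∈ H)))]
    have hfil : ∀ w ∈ Finset.univ.filter (· ∈ H),
        (T.filter (fun p => p.1 * p.2⁻¹ = w)).card = (D ∩ D.image (· * w)).card := by
      intro w hw
      rw [← hpair w]
      congr 1
      rw [hTdef, Finset.filter_filter]
      apply Finset.filter_congr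
      intro p _
      simp only [Finset.mem_filter, Finset.mem_univ, true_and] at hw
      exact ⟨fun h => h.2, fun h => ⟨h ▸ hw, h⟩⟩
    rw [Finset.sum_congr rfl hfil]
    have h1mem : (1 : G) ∈ Finset.univ.filter (· ∈ H) := by simp [H.one_mem]
    rw [← Finset.add_sum_erase _ _ h1mem, hD1]
    congr 1
    rw [Finset.sum_congr rfl (fun w hw => hDS w (Finset.ne_of_mem_erase hw)),
      Finset.sum_const, Finset.card_erase_of_mem h1mem, hHF, smul_eq_mul]
  have hkk : k * k = k + (v - 1) * lam := by
    have hcard : (D ×ˢ D).card = k * k := by rw [Finset.card_product, hk]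
    rw [← hcard, Finset.card_eq_sum_card_fiberwise
      (f := fun p : G × G => p.1 * p.2⁻¹) (t := Finset.univ) (fun x _ => Finset.mem_univ _),
      Finset.sum_congr rfl (fun w _ => hpair w)]
    have h1mem : (1 : G) ∈ (Finset.univ : Finset G) := Finset.mem_univ _
    rw [← Finset.add_sum_erase _ _ h1mem, hD1]
    congr 1
    rw [Finset.sum_congr rfl (fun w hw => hDS w (Finset.ne_of_mem_erase hw)),
      Finset.sum_const, Finset.card_erase_of_mem h1mem, Finset.card_univ, hv, smul_eq_mul]
  -- now the real analysis
  have hn1 : 1 ≤ n := by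
    rw [← hn]; exact Nat.one_le_iff_ne_zero.mpr Nat.card_pos.ne'
  have hv1 : 1 ≤ v := by rw [← hv]; exact Fintype.card_pos
  have hℓR : (ℓ : ℝ) ≠ 0 := Nat.cast_ne_zero.mpr hℓpos.ne'
  set μ : ℝ := (k : ℝ) / ℓ with hμ
  have e0 : (∑ j, (K j : ℝ)) = k := by exact_mod_cast congrArg (Nat.cast (R := ℝ)) hsum1
  have e1 : (∑ j, (K j : ℝ) ^ 2) = (k : ℝ) + ((n : ℝ) - 1) * lam := by
    have h := congrArg (Nat.cast (R := ℝ)) (hsum2.trans hTcard)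
    push_cast [Nat.cast_sub hn1] at h
    exact h
  have ekk : (k : ℝ) * k = (k : ℝ) + ((n : ℝ) * ℓ - 1) * lam := by
    have hv1' : 1 ≤ n * ℓ := hvnl ▸ hv1
    have h := congrArg (Nat.cast (R := ℝ)) hkk
    rw [hvnl] at h
    push_cast [Nat.cast_sub hv1'] at h
    exact h
  have hvar : ∑ j, ((K j : ℝ) - μ) ^ 2 = ((k : ℝ) - lam) * ((ℓ : ℝ) - 1) / ℓ := by
    have expand : ∑ j, ((K j : ℝ) - μ) ^ 2
        = (∑ j, (K j : ℝ) ^ 2) - 2 * μ * (∑ j, (K j : ℝ)) + ℓ * μ ^ 2 := by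
      rw [Finset.mul_sum]
      rw [Finset.sum_congr rfl (fun j _ => (by ring :
        ((K j : ℝ) - μ) ^ 2 = ((K j : ℝ) ^ 2 - 2 * μ * (K j : ℝ)) + μ ^ 2))]
      rw [Finset.sum_add_distrib, Finset.sum_sub_distrib, Finset.sum_const,
        Finset.card_univ, Fintype.card_fin, nsmul_eq_mul]
    rw [expand, e0, e1, hμ]
    field_simp
    linear_combination (-1 : ℝ) * ekk
  have hsingle : ((K i : ℝ) - μ) ^ 2 ≤ ∑ j, ((K j : ℝ) - μ) ^ 2 :=
    Finset.single_le_sum (f := fun j => ((K j : ℝ) - μ) ^ 2)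
      (fun j _ => sq_nonneg _) (Finset.mem_univ i)
  have habs : |(K i : ℝ) - μ| ≤ Real.sqrt (((k : ℝ) - lam) * ((ℓ : ℝ) - 1) / ℓ) := by
    apply Real.abs_le_sqrt
    rw [← hvar]
    exact hsingle
  have hb := abs_le.1 habs
  exact ⟨by linarith [hb.1], by linarith [hb.2]⟩
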